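/- Let E be an infinite-dimensional vector space and I a countably infinite set. For φ : I → I, the following are equivalent: (1) for every family (e_i)_{i∈I} in E, the existence of a linear operator T : span{e_i}_{i∈I} → E with T(e_i) = e_{φ(i)} for all i∈I together with span{e_i}_{i∈I} being infinite-dimensional implies (e_i)_{i∈I} is linearly independent; (2) there exists a ∈ I with Orb_φ(a) = I. -/

import Mathlib

open Function Set Submodule

private lemma orbit_fin {I : Type*} (φ : I → I) (a : I) {m n : ℕ} (hmn : m < n)
    (h : φ^[m] a = φ^[n] a) : (Set.range fun k => φ^[k] a).Finite := by
  have key : ∀ j, m ≤ j → φ^[j + (n - m)] a = φ^[j] a := by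
    intro j hj
    have h1 : j + (n - m) = (j - m) + n := by omega
    have h2 : j = (j - m) + m := by omega
    rw [h1, Function.iterate_add_apply, ← h, ← Function.iterate_add_apply, ← h2]
  have main : ∀ k, φ^[k] a ∈ (fun j => φ^[j] a) '' Set.Iio n := by
    intro k
    induction k using Nat.strong_induction_on with
    | _ k ih =>
      rcases lt_or_ge k n with hk | hk
      · exact ⟨k, hk, rfl⟩
      · have hk' : φ^[k] a = φ^[k - (n - m)] a := by
          have h3 := key (k - (n - m)) (by omega)
          rw [← h3]; congr 1; omega
        rw [hk']
        exact ih _ (by omega)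
  exact Set.Finite.subset ((Set.finite_Iio n).image _) (Set.range_subset_iff.mpr main)

private lemma exists_li (K : Type*) [Field K] {E : Type*} [AddCommGroup E] [Module K E]
    (hE : ¬ Module.Finite K E) (Q : Type*) [Countable Q] :
    ∃ u : Q → E, LinearIndependent K u := by
  let b := Module.Basis.ofVectorSpace K E
  have hinf : Infinite (Module.Basis.ofVectorSpaceIndex K E) := by
    by_contra hfin
    rw [not_infinite_iff_finite] at hfin
    exact hE (Module.Finite.of_basis b)
  obtain ⟨f, hf⟩ := Countable.exists_injective_nat Q
  let g := Infinite.natEmbedding (Module.Basis.ofVectorSpaceIndex K E)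
  exact ⟨b ∘ (g ∘ f), b.linearIndependent.comp _ (g.injective.comp hf)⟩

private lemma not_fin_span {K : Type*} [Field K] {E : Type*} [AddCommGroup E] [Module K E]
    {Q : Type*} [Infinite Q] {u : Q → E} (hu : LinearIndependent K u) {s : Set E}
    (hsub : ∀ q, u q ∈ s) : ¬ Module.Finite K ↥(Submodule.span K s) := by
  intro hfin
  have hmem : ∀ q, u q ∈ Submodule.span K s := fun q => Submodule.subset_span (hsub q)
  have hli : LinearIndependent K (fun q => (⟨u q, hmem q⟩ : Submodule.span K s)) := by
    apply LinearIndependent.of_comp (Submodule.span K s).subtype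
    convert hu
    rfl
  exact Module.Finite.not_linearIndependent_of_infinite _ hli

private lemma li_shift {K : Type*} [Field K] {E : Type*} [AddCommGroup E] [Module K E]
    (f : ℕ → E)
    (T : ↥(Submodule.span K (Set.range f)) →ₗ[K] E)
    (hT : ∀ n, T ⟨f n, Submodule.subset_span (Set.mem_range_self n)⟩ = f (n+1))
    (hnf : ¬ Module.Finite K ↥(Submodule.span K (Set.range f))) :
    LinearIndependent K f := by
  classical
  by_contra hli
  rw [linearIndependent_iff'] at hli
  push_neg at hli
  obtain ⟨s, g, hsum, j, hjs, hgj⟩ := hli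
  set t : Finset ℕ := s.filter (fun i => g i ≠ 0) with ht
  have htne : t.Nonempty := ⟨j, by simp [ht, hjs, hgj]⟩
  set N := t.max' htne with hN
  have hNt : N ∈ t := t.max'_mem htne
  have hNs : N ∈ s := (Finset.mem_filter.mp hNt).1
  have hgN : g N ≠ 0 := (Finset.mem_filter.mp hNt).2
  set S0 : Submodule K E := Submodule.span K (f '' Set.Iio N) with hS0
  -- f N ∈ S0
  have hfN : f N ∈ S0 := by
    have hsplit : g N • f N + ∑ i ∈ s.erase N, g i • f i = ∑ i ∈ s, g i • f i :=
      Finset.add_sum_erase s (fun i => g i • f i) hNs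
    have heq : g N • f N = - ∑ i ∈ s.erase N, g i • f i := by
      rw [hsum] at hsplit
      exact eq_neg_of_add_eq_zero_left hsplit
    have hmem : ∑ i ∈ s.erase N, g i • f i ∈ S0 := by
      apply Submodule.sum_mem
      intro i hi
      by_cases hgi : g i = 0
      · rw [hgi, zero_smul]; exact Submodule.zero_mem _
      · have hit : i ∈ t := Finset.mem_filter.mpr ⟨Finset.mem_of_mem_erase hi, hgi⟩
        have hiN : i < N := lt_of_le_of_ne (t.le_max' i hit) (Finset.ne_of_mem_erase hi)
        exact Submodule.smul_mem _ _ (Submodule.subset_span ⟨i, hiN, rfl⟩)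
    have : f N = (g N)⁻¹ • (g N • f N) := by rw [smul_smul, inv_mul_cancel₀ hgN, one_smul]
    rw [this, heq]
    exact Submodule.smul_mem _ _ (Submodule.neg_mem _ hmem)
  -- T maps elements of S0 (inside span range f) into S0
  have hTmap : ∀ x : ↥(Submodule.span K (Set.range f)), (x : E) ∈ S0 → T x ∈ S0 := by
    intro x hx
    set g' : Set.Iio N → ↥(Submodule.span K (Set.range f)) :=
      fun j => ⟨f j, Submodule.subset_span (Set.mem_range_self (j : ℕ))⟩ with hg'
    have himg : Subtype.val '' Set.range g' = f '' Set.Iio N := by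
      rw [← Set.range_comp]
      ext z
      constructor
      · rintro ⟨j, rfl⟩; exact ⟨j, j.2, rfl⟩
      · rintro ⟨j, hj, rfl⟩; exact ⟨⟨j, hj⟩, rfl⟩
    have hx' : x ∈ Submodule.span K (Set.range g') := by
      have : (x : E) ∈ Submodule.map (Submodule.span K (Set.range f)).subtype
          (Submodule.span K (Set.range g')) := by
        rw [← Submodule.span_image]
        show (x:E) ∈ Submodule.span K (Subtype.val '' Set.range g')
        rw [himg]; exact hx
      obtain ⟨y, hy, hyx⟩ := this
      have : y = x := Subtype.ext hyx
      rwa [this] at hy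
    have : T x ∈ Submodule.map T (Submodule.span K (Set.range g')) := ⟨x, hx', rfl⟩
    rw [← Submodule.span_image] at this
    refine Submodule.span_le.mpr ?_ this
    rintro _ ⟨_, ⟨j, rfl⟩, rfl⟩
    have hTj : T (g' j) = f ((j : ℕ) + 1) := hT j
    rw [hTj]
    rcases lt_or_eq_of_le (Nat.succ_le_of_lt j.2) with h | h
    · exact Submodule.subset_span ⟨(j:ℕ)+1, h, rfl⟩
    · have : (↑j:ℕ) + 1 = N := h
      rw [this]; exact hfN
  -- every f m ∈ S0
  have hall : ∀ m, f m ∈ S0 := by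
    intro m
    induction m using Nat.strong_induction_on with
    | _ m ih =>
      rcases lt_trichotomy m N with h | h | h
      · exact Submodule.subset_span ⟨m, h, rfl⟩
      · rw [h]; exact hfN
      · obtain ⟨k, rfl⟩ : ∃ k, m = k + 1 := ⟨m - 1, by omega⟩
        have := hTmap ⟨f k, Submodule.subset_span (Set.mem_range_self k)⟩ (ih k (by omega))
        rwa [hT k] at this
  -- contradiction
  have hle : Submodule.span K (Set.range f) ≤ S0 :=
    Submodule.span_le.mpr (Set.range_subset_iff.mpr hall)
  have hfin0 : Module.Finite K ↥S0 :=
    FiniteDimensional.span_of_finite K ((Set.finite_Iio N).image f)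
  exact hnf (Submodule.finiteDimensional_of_le hle)

theorem stmt_14 {K : Type*} [Field K] {E : Type*} [AddCommGroup E] [Module K E]
    (hE : ¬ Module.Finite K E)
    {I : Type*} [Countable I] [Infinite I]
    (φ : I → I) :
    (∀ e : I → E,
      (∃ T : ↥(Submodule.span K (Set.range e)) →ₗ[K] E,
        ∀ i : I, T ⟨e i, Submodule.subset_span (Set.mem_range_self i)⟩ = e (φ i)) →
      ¬ Module.Finite K ↥(Submodule.span K (Set.range e)) →
      LinearIndependent K e) ↔
    (∃ a : I, Set.range (fun n : ℕ => φ^[n] a) = Set.univ) := by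
  classical
  constructor
  · intro h1
    obtain ⟨u, hu⟩ := exists_li K hE I
    -- Step A: φ is injective
    have hinj : Function.Injective φ := by
      intro x y hxy
      by_contra hne
      set σ : I → I := fun i => if i = y then x else i with hσ
      set e : I → E := u ∘ σ with he
      have hσr : ∀ i, σ i ≠ y := by
        intro i
        by_cases h : i = y <;> simp [hσ, h, hne]
      set w : ↥({y}ᶜ : Set I) → E := fun r => u r with hw'
      have hw : LinearIndependent K w := hu.comp _ Subtype.val_injective
      have hwe : ∀ r : ↥({y}ᶜ : Set I), w r ∈ Set.range e := by
        intro r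
        refine ⟨r, ?_⟩
        have hr : σ (r : I) = (r : I) := if_neg r.2
        show u (σ (r : I)) = u (r : I)
        rw [hr]
      have hsp : Submodule.span K (Set.range e) = Submodule.span K (Set.range w) := by
        apply le_antisymm
        · rw [Submodule.span_le]
          rintro _ ⟨i, rfl⟩
          exact Submodule.subset_span ⟨⟨σ i, hσr i⟩, rfl⟩
        · rw [Submodule.span_le]
          rintro _ ⟨r, rfl⟩
          exact Submodule.subset_span (hwe r)
      set B : Module.Basis ↥({y}ᶜ : Set I) K ↥(Submodule.span K (Set.range e)) :=
        (Module.Basis.span hw).map (LinearEquiv.ofEq _ _ hsp.symm) with hB'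
      have hB : ∀ r, (B r : E) = w r := by
        intro r
        simp [hB', Module.Basis.span_apply]
      set T : ↥(Submodule.span K (Set.range e)) →ₗ[K] E :=
        B.constr K (fun r => e (φ (r : I))) with hT'
      have hT : ∀ i, T ⟨e i, Submodule.subset_span (Set.mem_range_self i)⟩ = e (φ i) := by
        intro i
        have h1' : (⟨e i, Submodule.subset_span (Set.mem_range_self i)⟩ :
            ↥(Submodule.span K (Set.range e))) = B ⟨σ i, hσr i⟩ := by
          apply Subtype.ext
          rw [hB]
          rfl
        rw [h1', hT', Module.Basis.constr_basis]
        by_cases h : i = y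
        · subst h
          show e (φ (σ i)) = e (φ i)
          have : σ i = x := if_pos rfl
          rw [this, hxy]
        · show e (φ (σ i)) = e (φ i)
          rw [show σ i = i from if_neg h]
      have hnfin : ¬ Module.Finite K ↥(Submodule.span K (Set.range e)) := by
        haveI : Infinite ↥({y}ᶜ : Set I) :=
          Set.infinite_coe_iff.mpr ((Set.finite_singleton y).infinite_compl)
        exact not_fin_span hw hwe
      have hLI := (h1 e ⟨T, hT⟩ hnfin).injective
      have hxy2 : e x = e y := by
        show u (σ x) = u (σ y)
        rw [show σ x = x from if_neg hne, show σ y = x from if_pos rfl]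
      exact hne (hLI hxy2)
    -- Step B: every orbit is cofinite
    have hcof : ∀ a : I, ((Set.range fun n : ℕ => φ^[n] a)ᶜ).Finite := by
      intro a
      by_contra hinfc
      set S : Set I := Set.range fun n : ℕ => φ^[n] a with hS
      have hSinv : ∀ i ∈ S, φ i ∈ S := by
        rintro i ⟨n, rfl⟩
        exact ⟨n+1, by simpa using Function.iterate_succ_apply' φ n a⟩
      set e : I → E := fun i => if i ∈ S then 0 else u i with he
      haveI : Infinite ↥(Sᶜ) := Set.infinite_coe_iff.mpr hinfc
      set w : ↥(Sᶜ) → E := fun r => u r with hw'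
      have hw : LinearIndependent K w := hu.comp _ Subtype.val_injective
      have hwe : ∀ r : ↥(Sᶜ), w r ∈ Set.range e := fun r => ⟨r, if_neg r.2⟩
      have hsp : Submodule.span K (Set.range e) = Submodule.span K (Set.range w) := by
        apply le_antisymm
        · rw [Submodule.span_le]
          rintro _ ⟨i, rfl⟩
          by_cases hi : i ∈ S
          · rw [show e i = 0 from if_pos hi]; exact Submodule.zero_mem _
          · rw [show e i = u i from if_neg hi]
            exact Submodule.subset_span ⟨⟨i, hi⟩, rfl⟩
        · rw [Submodule.span_le]
          rintro _ ⟨r, rfl⟩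
          exact Submodule.subset_span (hwe r)
      set B : Module.Basis ↥(Sᶜ) K ↥(Submodule.span K (Set.range e)) :=
        (Module.Basis.span hw).map (LinearEquiv.ofEq _ _ hsp.symm) with hB'
      have hB : ∀ r, (B r : E) = w r := by
        intro r
        simp [hB', Module.Basis.span_apply]
      set T : ↥(Submodule.span K (Set.range e)) →ₗ[K] E :=
        B.constr K (fun r => e (φ (r : I))) with hT'
      have hT : ∀ i, T ⟨e i, Submodule.subset_span (Set.mem_range_self i)⟩ = e (φ i) := by
        intro i
        by_cases hi : i ∈ S
        · have h0 : (⟨e i, Submodule.subset_span (Set.mem_range_self i)⟩ :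
              ↥(Submodule.span K (Set.range e))) = 0 := Subtype.ext (if_pos hi)
          rw [h0, map_zero, show e (φ i) = 0 from if_pos (hSinv i hi)]
        · have h0 : (⟨e i, Submodule.subset_span (Set.mem_range_self i)⟩ :
              ↥(Submodule.span K (Set.range e))) = B ⟨i, hi⟩ := by
            apply Subtype.ext
            rw [hB]
            exact if_neg hi
          rw [h0, hT', Module.Basis.constr_basis]
      have hnfin : ¬ Module.Finite K ↥(Submodule.span K (Set.range e)) :=
        not_fin_span hw hwe
      have hLI := h1 e ⟨T, hT⟩ hnfin
      exact hLI.ne_zero a (if_pos ⟨0, rfl⟩)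
    -- no periodic points
    have hnoper : ∀ (x : I) (n : ℕ), 0 < n → φ^[n] x ≠ x := by
      intro x n hn hfix
      have hfin : (Set.range fun k => φ^[k] x).Finite :=
        orbit_fin φ x (m := 0) (n := n) hn (by simp [hfix])
      have huniv : (Set.univ : Set I).Finite := by
        rw [← Set.union_compl_self (Set.range fun k => φ^[k] x)]
        exact hfin.union (hcof x)
      exact Set.infinite_univ huniv
    -- φ is not surjective
    have hnsurj : ¬ Function.Surjective φ := by
      intro hsurj
      have : Nonempty I := inferInstance
      set a : I := Classical.arbitrary I with ha
      set g : I → I := Function.surjInv hsurj with hg'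
      have hg : ∀ z, φ (g z) = z := fun z => Function.surjInv_eq hsurj z
      have hback : ∀ k, φ^[k] (g^[k] a) = a := by
        intro k
        induction k with
        | zero => rfl
        | succ k ih =>
          rw [Function.iterate_succ_apply' (f := g), Function.iterate_succ_apply (f := φ),
            hg, ih]
      have hkey : ∀ j k : ℕ, j ≤ k → g^[j+1] a = g^[k+1] a → j = k := by
        intro j k hjk heq
        by_contra hne2
        have h1' : φ^[k+1] (g^[k+1] a) = a := hback (k+1)
        have h2 : φ^[k+1] (g^[j+1] a) = φ^[k-j] a := by
          rw [show k+1 = (k-j) + (j+1) by omega, Function.iterate_add_apply, hback]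
        rw [heq, h1'] at h2
        exact hnoper a (k-j) (by omega) h2.symm
      have hinj2 : Function.Injective (fun k : ℕ => g^[k+1] a) := by
        intro j k h
        rcases le_total j k with hjk | hkj
        · exact hkey j k hjk h
        · exact (hkey k j hkj h.symm).symm
      have hmem : ∀ k : ℕ, g^[k+1] a ∈ (Set.range fun n : ℕ => φ^[n] a)ᶜ := by
        intro k hk
        obtain ⟨n, hn⟩ := hk
        have hn' : φ^[n] a = g^[k+1] a := hn
        have : φ^[k+1+n] a = a := by
          rw [Function.iterate_add_apply, hn']
          exact hback (k+1)
        exact hnoper a (k+1+n) (by omega) this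
      exact (Set.infinite_of_injective_forall_mem hinj2 hmem) (hcof a)
    obtain ⟨c, hc⟩ : ∃ c : I, ∀ b, φ b ≠ c := by
      simp only [Function.Surjective, not_forall, not_exists] at hnsurj
      exact hnsurj
    refine ⟨c, Set.eq_univ_of_forall ?_⟩
    intro y
    have hex : ∃ m : ℕ, ∃ n : ℕ, φ^[n] c = φ^[m] y := by
      by_contra hno
      push_neg at hno
      have hsub : (Set.range fun m : ℕ => φ^[m] y) ⊆ (Set.range fun n : ℕ => φ^[n] c)ᶜ := by
        rintro _ ⟨m, rfl⟩ ⟨n, hn⟩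
        exact hno m n hn
      have hfin : (Set.range fun m : ℕ => φ^[m] y).Finite := (hcof c).subset hsub
      have huniv : (Set.univ : Set I).Finite := by
        rw [← Set.union_compl_self (Set.range fun m : ℕ => φ^[m] y)]
        exact hfin.union (hcof y)
      exact Set.infinite_univ huniv
    obtain ⟨n, hn⟩ := Nat.find_spec hex
    by_cases h0 : Nat.find hex = 0
    · rw [h0] at hn
      exact ⟨n, by simpa using hn⟩
    · exfalso
      obtain ⟨m', hm'⟩ : ∃ m', Nat.find hex = m' + 1 := ⟨Nat.find hex - 1, by omega⟩
      rw [hm'] at hn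
      cases n with
      | zero =>
        rw [Function.iterate_succ_apply'] at hn
        exact hc (φ^[m'] y) (by simpa using hn.symm)
      | succ n' =>
        rw [Function.iterate_succ_apply' φ n', Function.iterate_succ_apply' φ m'] at hn
        exact Nat.find_min hex (by omega : m' < Nat.find hex) ⟨n', hinj hn⟩
  · rintro ⟨a, ha⟩ e ⟨T, hT⟩ hnfin
    have hinj : Function.Injective (fun n : ℕ => φ^[n] a) := by
      intro m n hmn
      by_contra hne
      have hfin : (Set.range fun k => φ^[k] a).Finite := by
        rcases lt_or_gt_of_ne hne with h | h
        · exact orbit_fin φ a h hmn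
        · exact orbit_fin φ a h hmn.symm
      rw [ha] at hfin
      exact Set.infinite_univ hfin
    have hsurj : Function.Surjective (fun n : ℕ => φ^[n] a) := by
      intro y
      have : y ∈ Set.range fun n : ℕ => φ^[n] a := ha ▸ Set.mem_univ y
      exact this
    set q : ℕ ≃ I := Equiv.ofBijective _ ⟨hinj, hsurj⟩ with hq
    have hqs : ∀ n : ℕ, q (n+1) = φ (q n) := by
      intro n
      show φ^[n+1] a = φ (φ^[n] a)
      rw [Function.iterate_succ_apply']
    rw [← linearIndependent_equiv q]
    have hrange : Set.range (e ∘ q) = Set.range e := by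
      rw [Set.range_comp, Equiv.range_eq_univ, Set.image_univ]
    set T' : ↥(Submodule.span K (Set.range (e ∘ q))) →ₗ[K] E :=
      T ∘ₗ (Submodule.inclusion (le_of_eq (by rw [hrange]))) with hT2
    have hT'app : ∀ nn : ℕ,
        T' ⟨(e ∘ q) nn, Submodule.subset_span (Set.mem_range_self nn)⟩ = (e ∘ q) (nn+1) := by
      intro nn
      calc T' ⟨(e ∘ q) nn, Submodule.subset_span (Set.mem_range_self nn)⟩
          = T ⟨e (q nn), Submodule.subset_span (Set.mem_range_self (q nn))⟩ := rfl
        _ = e (φ (q nn)) := hT (q nn)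
        _ = (e ∘ q) (nn+1) := by
            show e (φ (q nn)) = e (q (nn+1))
            rw [hqs]
    exact li_shift (e ∘ q) T' hT'app (by rw [hrange]; exact hnfin)
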